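/- Let x̄ ∈ X be a minimizer of F, let x⁰ ∈ E, let H be a self-adjoint continuous linear operator on E with ⟨H u, u⟩ ≥ μ·‖u‖² for all u ∈ E with μ > 0, and let x̃ be a minimizer over E of q(x) = f(x⁰) + ⟨∇f(x⁰), x − x⁰⟩ + (1/2)⟨H(x − x⁰), x − x⁰⟩ + g(x). Then ‖x̃ − x̄‖ ≤ (1/μ)·‖∇f(x̄) − ∇f(x⁰) − H(x̄ − x⁰)‖. -/

import Mathlib

open scoped RealInnerProductSpace

abbrev E (n : ℕ) := EuclideanSpace ℝ (Fin n)

lemma aux_lin {A B : ℝ} (h : ∀ t : ℝ, t ∈ Set.Ioc (0:ℝ) 1 → 0 ≤ A + t * B) :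
    0 ≤ A := by
  by_contra hA
  push_neg at hA
  rcases le_or_gt B 0 with hB | hB
  · have := h 1 ⟨one_pos, le_refl 1⟩
    nlinarith
  · have ht : min 1 (-A / (2 * B)) ∈ Set.Ioc (0:ℝ) 1 := by
      constructor
      · exact lt_min one_pos (div_pos (by linarith) (by linarith))
      · exact min_le_left _ _
    have := h _ ht
    have h2 : min 1 (-A / (2 * B)) * B ≤ (-A / (2 * B)) * B :=
      mul_le_mul_of_nonneg_right (min_le_right _ _) hB.le
    have h3 : (-A / (2 * B)) * B = -A / 2 := by field_simp
    nlinarith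

lemma aux_subgrad {n : ℕ} {f g : E n → ℝ} {v x : E n}
    (hv : HasGradientAt f v x) (hg : ConvexOn ℝ Set.univ g)
    (hmin : ∀ y, f x + g x ≤ f y + g y) (y : E n) :
    0 ≤ ⟪v, y - x⟫ + (g y - g x) := by
  set d := y - x with hd
  have hc : HasDerivAt (fun t : ℝ => x + t • d) d 0 := by
    simpa using ((hasDerivAt_id (0:ℝ)).smul_const d).const_add x
  have hline : HasDerivAt (fun t : ℝ => f (x + t • d)) ⟪v, d⟫ 0 := by
    have hfd : HasFDerivAt f ((InnerProductSpace.toDual ℝ (E n)) v)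
        ((fun t : ℝ => x + t • d) 0) := by simpa using hv.hasFDerivAt
    have := hfd.comp_hasDerivAt 0 hc
    simpa only [Function.comp_def, InnerProductSpace.toDual_apply_apply] using this
  have hslope : Filter.Tendsto (slope (fun t : ℝ => f (x + t • d)) 0)
      (nhdsWithin 0 (Set.Ioi 0)) (nhds ⟪v, d⟫) :=
    (hasDerivAt_iff_tendsto_slope.1 hline).mono_left
      (nhdsWithin_mono 0 (fun t ht => ne_of_gt ht : Set.Ioi (0:ℝ) ⊆ {(0:ℝ)}ᶜ))
  have hten : Filter.Tendsto
      (fun t : ℝ => slope (fun t : ℝ => f (x + t • d)) 0 t + (g y - g x))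
      (nhdsWithin 0 (Set.Ioi 0)) (nhds (⟪v, d⟫ + (g y - g x))) :=
    hslope.add tendsto_const_nhds
  refine ge_of_tendsto hten ?_
  filter_upwards [Ioc_mem_nhdsGT_of_mem (Set.left_mem_Ico.2 one_pos)] with t ht
  obtain ⟨ht0, ht1⟩ := ht
  have hconv : g (x + t • d) ≤ (1 - t) * g x + t * g y := by
    have hcomb : (1 - t) • x + t • y = x + t • d := by
      rw [hd]; module
    have := hg.2 (Set.mem_univ x) (Set.mem_univ y)
      (by linarith : (0:ℝ) ≤ 1 - t) ht0.le (by ring)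
    simpa [hcomb, smul_eq_mul] using this
  have hmin' := hmin (x + t • d)
  have key : 0 ≤ f (x + t • d) - f x + t * (g y - g x) := by nlinarith
  have hsl : slope (fun t : ℝ => f (x + t • d)) 0 t = (f (x + t • d) - f x) / t := by
    rw [slope_def_field]; simp
  rw [hsl, show (f (x + t • d) - f x) / t + (g y - g x)
      = (f (x + t • d) - f x + t * (g y - g x)) / t by field_simp]
  exact div_nonneg key ht0.le

/-- If `x̄ ∈ X` minimizes `F`, `H` is self-adjoint with
`⟨Hu,u⟩ ≥ μ‖u‖²` (`μ > 0`), and `x̃` minimizes `q`, then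
`‖x̃ − x̄‖ ≤ (1/μ)‖∇f(x̄) − ∇f(x⁰) − H(x̄ − x⁰)‖`. -/
theorem stmt7 {n : ℕ} (f g : E n → ℝ) (f' : E n → E n)
    (hfconv : ConvexOn ℝ Set.univ f) (hfC2 : ContDiff ℝ 2 f)
    (hgrad : ∀ x, HasGradientAt f (f' x) x)
    (hgconv : ConvexOn ℝ Set.univ g) (hgcont : Continuous g)
    (F : E n → ℝ) (hF : ∀ y, F y = f y + g y)
    (X : Set (E n)) (hX : X = {y | ∀ z, F y ≤ F z}) (hXne : X.Nonempty)
    (xbar : E n) (hxbar : xbar ∈ X)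
    (x₀ : E n) (H : E n →L[ℝ] E n)
    (hsa : ∀ u w, ⟪H u, w⟫ = ⟪u, H w⟫)
    (μ : ℝ) (hμ : 0 < μ) (hlb : ∀ u, μ * ‖u‖ ^ 2 ≤ ⟪H u, u⟫)
    (q : E n → ℝ)
    (hq : ∀ y, q y = f x₀ + ⟪f' x₀, y - x₀⟫ + (1/2) * ⟪H (y - x₀), y - x₀⟫ + g y)
    (xt : E n) (hxt : ∀ y, q xt ≤ q y) :
    ‖xt - xbar‖ ≤ (1 / μ) * ‖f' xbar - f' x₀ - H (xbar - x₀)‖ := by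
  -- Part A: optimality of xbar for f + g
  have hminbar : ∀ y, f xbar + g xbar ≤ f y + g y := by
    intro y
    have := (hX ▸ hxbar) y
    rwa [hF, hF] at this
  have hA : 0 ≤ ⟪f' xbar, xt - xbar⟫ + (g xt - g xbar) :=
    aux_subgrad (hgrad xbar) hgconv hminbar xt
  -- Part B: optimality of xt for q
  set u := xbar - xt with hu
  set a := xt - x₀ with ha
  have hB : 0 ≤ (⟪f' x₀, u⟫ + ⟪H a, u⟫ + (g xbar - g xt)) := by
    apply aux_lin (B := (1/2) * ⟪H u, u⟫)
    intro t ht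
    obtain ⟨ht0, ht1⟩ := ht
    have hmin' := hxt (xt + t • u)
    rw [hq, hq] at hmin'
    have hexp : xt + t • u - x₀ = a + t • u := by rw [ha, hu]; module
    rw [hexp] at hmin'
    have e1 : ⟪f' x₀, a + t • u⟫ = ⟪f' x₀, a⟫ + t * ⟪f' x₀, u⟫ := by
      rw [inner_add_right, real_inner_smul_right]
    have e2 : ⟪H (a + t • u), a + t • u⟫
        = ⟪H a, a⟫ + 2 * t * ⟪H a, u⟫ + t ^ 2 * ⟪H u, u⟫ := by
      rw [map_add, map_smul, inner_add_left, inner_add_right, inner_add_right,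
        real_inner_smul_left, real_inner_smul_right, real_inner_smul_left,
        real_inner_smul_right]
      have : ⟪H u, a⟫ = ⟪H a, u⟫ := by rw [hsa, real_inner_comm]
      rw [this]; ring
    have hconv : g (xt + t • u) ≤ (1 - t) * g xt + t * g xbar := by
      have hcomb : (1 - t) • xt + t • xbar = xt + t • u := by rw [hu]; module
      have := hgconv.2 (Set.mem_univ xt) (Set.mem_univ xbar)
        (by linarith : (0:ℝ) ≤ 1 - t) ht0.le (by ring)
      simpa [hcomb, smul_eq_mul] using this
    rw [e1, e2] at hmin'
    have key : 0 ≤ t * (⟪f' x₀, u⟫ + ⟪H a, u⟫ + (g xbar - g xt)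
        + t * ((1/2) * ⟪H u, u⟫)) := by nlinarith
    have hX := (mul_le_mul_iff_right₀ ht0).mp (by linarith : t * 0 ≤ t * (⟪f' x₀, u⟫ + ⟪H a, u⟫ + (g xbar - g xt) + t * ((1/2) * ⟪H u, u⟫)))
    linarith
  -- combine
  set s := xt - xbar with hs
  set w := f' xbar - f' x₀ - H (xbar - x₀) with hw
  have hcomb : 0 ≤ ⟪f' xbar - f' x₀ - H a, s⟫ := by
    have e : ⟪f' xbar - f' x₀ - H a, s⟫
        = ⟪f' xbar, s⟫ + (⟪f' x₀, u⟫ + ⟪H a, u⟫) := by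
      rw [hu, inner_sub_left, inner_sub_left]
      rw [show xbar - xt = -s by rw [hs]; abel, inner_neg_right, inner_neg_right]
      ring
    rw [e]; linarith
  have hsplit : ⟪f' xbar - f' x₀ - H a, s⟫ = ⟪w, s⟫ - ⟪H s, s⟫ := by
    have hH : H (xbar - x₀) = H (xt - x₀) + H (xbar - xt) := by
      rw [← map_add]; congr 1; abel
    have hneg : H (xt - xbar) = - H (xbar - xt) := by
      rw [← map_neg]; congr 1; abel
    have e : f' xbar - f' x₀ - H a = w - H s := by
      rw [hw, ha, hs, hH, hneg]; abel
    rw [e, inner_sub_left]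
  have h1 : μ * ‖s‖ ^ 2 ≤ ⟪w, s⟫ := by
    have := hlb s
    linarith [hsplit ▸ hcomb]
  have h2 : ⟪w, s⟫ ≤ ‖w‖ * ‖s‖ := real_inner_le_norm w s
  rcases eq_or_lt_of_le (norm_nonneg s) with h0 | h0
  · rw [← h0]
    positivity
  · rw [show (1 / μ) * ‖w‖ = ‖w‖ / μ by ring, le_div_iff₀ hμ]
    nlinarith
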